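/- If R is a binomial ring, then for every prime p and every a ∈ R, Fermat's Little Theorem holds: a^p ≡ a (mod pR). -/
import Mathlib

open Polynomial

lemma aux_descPochhammer_eq_prod_range (R : Type*) [CommRing R] (n : ℕ) :
    descPochhammer R n = ∏ i ∈ Finset.range n, (X - C (i : R)) := by
  induction n with
  | zero => simp
  | succ n ih => rw [descPochhammer_succ_right, ih, Finset.prod_range_succ, C_eq_natCast]

lemma aux_descPochhammer_zmod (p : ℕ) [Fact p.Prime] :
    descPochhammer (ZMod p) p = X ^ p - X := by
  have hp : p.Prime := Fact.out
  have hcard : Fintype.card (ZMod p) = p := ZMod.card p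
  have hroots := FiniteField.roots_X_pow_card_sub_X (ZMod p)
  rw [hcard] at hroots
  have hmonic : (X ^ p - X : (ZMod p)[X]).Monic :=
    monic_X_pow_sub (degree_X_le.trans_lt (by exact_mod_cast hp.one_lt))
  have hdeg : (X ^ p - X : (ZMod p)[X]).natDegree = p :=
    FiniteField.X_pow_card_sub_X_natDegree_eq _ hp.one_lt
  have hprod := prod_multiset_X_sub_C_of_monic_of_roots_card_eq hmonic
    (by rw [hroots, hdeg]; simp [hcard])
  rw [hroots] at hprod
  rw [aux_descPochhammer_eq_prod_range, ← hprod]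
  show _ = ∏ x : ZMod p, (X - C x)
  refine Finset.prod_nbij' (fun i => (i : ZMod p)) (fun x => x.val) (by simp)
    (fun x _ => Finset.mem_range.mpr (ZMod.val_lt x)) ?_ ?_ (fun i _ => rfl)
  · intro i hi
    exact ZMod.val_natCast_of_lt (Finset.mem_range.mp hi)
  · intro x _
    simp [ZMod.natCast_val]

/-- Fermat's Little Theorem in a binomial ring: `a^p ≡ a (mod pR)` for every prime `p`. -/
theorem binomialRing_fermat_little {R : Type*} [CommRing R] [BinomialRing R]
    (p : ℕ) (hp : p.Prime) (a : R) :
    a ^ p - a ∈ Ideal.span ({(p : R)} : Set R) := by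
  haveI : Fact p.Prime := ⟨hp⟩
  set f : ℤ[X] := X ^ p - X - descPochhammer ℤ p with hf
  have hdvd : C (p : ℤ) ∣ f := by
    rw [C_dvd_iff_dvd_coeff]
    intro i
    rw [← ZMod.intCast_zmod_eq_zero_iff_dvd]
    have : (f.map (Int.castRingHom (ZMod p))).coeff i = 0 := by
      rw [hf]
      simp only [Polynomial.map_sub, Polynomial.map_pow, map_X,
        descPochhammer_map, aux_descPochhammer_zmod p]
      ring_nf
      simp
    simpa [coeff_map] using this
  obtain ⟨q, hq⟩ := hdvd
  have hsm := congrArg (fun g : ℤ[X] => g.smeval a) hq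
  simp only [hf, smeval_sub, smeval_pow, smeval_X, smeval_C_mul, pow_one] at hsm
  have hdesc : (descPochhammer ℤ p).smeval a = p.factorial • Ring.choose a p :=
    Ring.descPochhammer_eq_factorial_smul_choose a p
  rw [Ideal.mem_span_singleton]
  have : a ^ p - a = (p : R) * ((p-1).factorial • Ring.choose a p) + (p : R) * q.smeval a := by
    have hfac : p.factorial = p * (p-1).factorial := by
      cases p with
      | zero => exact absurd hp Nat.not_prime_zero
      | succ n => simp [Nat.factorial_succ]
    have : a ^ p - a - (descPochhammer ℤ p).smeval a = (p : ℤ) • q.smeval a := hsm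
    rw [hdesc, hfac, mul_nsmul] at this
    rw [sub_eq_iff_eq_add'] at this
    rw [this]
    push_cast [nsmul_eq_mul, zsmul_eq_mul]
    ring
  rw [this]
  exact dvd_add (Dvd.intro _ rfl) (Dvd.intro _ rfl)
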